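/- arXiv:2006.00462 — 2 statements merged into one kernel-verified Lean document; each statement's English description precedes it below -/
import Mathlib

section
/- Let X and Y be normed spaces and let x̄ be a local minimizer of the problem: minimize ϑ(x) subject to f(x) ∈ Θ. Assume that ϑ : X → ℝ is Lipschitz continuous around x̄ with constant ℓ ≥ 0 and Dini–Hadamard regular at x̄, that f : X → Y is continuously differentiable around x̄, that Θ ⊂ Y is convex and locally closed around ȳ := f(x̄) ∈ Θ, and that there exist κ > 0 and a neighborhood U of x̄ with dist(x; Ω) ≤ κ·dist(f(x); Θ) for all x ∈ U, where Ω := {x ∈ X : f(x) ∈ Θ}. Then there exists λ ∈ Y* such that 0 ∈ ∂⁻ϑ(x̄) + ∇f(x̄)*λ, λ ∈ N_Θ(ȳ), and ‖λ‖ ≤ ℓκ. -/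
open Filter Topology Set Metric Pointwise

noncomputable section

variable {E : Type*} [NormedAddCommGroup E] [NormedSpace ℝ E]

/-- Bouligand–Severi contingent tangent cone. -/
def contTangent (Ω : Set E) (x : E) : Set E :=
  {u | ∃ t : ℕ → ℝ, ∃ v : ℕ → E,
    (∀ k, 0 < t k) ∧ Tendsto t atTop (𝓝 0) ∧ Tendsto v atTop (𝓝 u) ∧
    ∀ k, x + t k • v k ∈ Ω}

/-- Dini–Hadamard subnormal cone. -/
def subNormal (Ω : Set E) (x : E) : Set (E →L[ℝ] ℝ) :=
  {v | ∀ u ∈ contTangent Ω x, v u ≤ 0}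

/-- Normal cone of convex analysis. -/
def convNormal (Θ : Set E) (y : E) : Set (E →L[ℝ] ℝ) :=
  {l | ∀ z ∈ Θ, l (z - y) ≤ 0}

/-- Difference quotient of an extended-real-valued function. -/
def diffQuot (φ : E → EReal) (x : E) (t : ℝ) (u : E) : EReal :=
  ((t⁻¹ : ℝ) : EReal) * (φ (x + t • u) - φ x)

/-- Dini–Hadamard subderivative. -/
def subDeriv (φ : E → EReal) (x : E) (u : E) : EReal :=
  Filter.liminf (fun p : ℝ × E => diffQuot φ x p.1 p.2) ((𝓝[>] (0:ℝ)) ×ˢ 𝓝 u)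

/-- Dini–Hadamard subdifferential. -/
def subDiff (φ : E → EReal) (x : E) : Set (E →L[ℝ] ℝ) :=
  {v | ∀ u, (v u : EReal) ≤ subDeriv φ x u}

/-- Proper extended-real-valued function. -/
def properFun (ψ : E → EReal) : Prop := (∀ u, ψ u ≠ ⊥) ∧ ∃ u, ψ u ≠ ⊤

def epiSet (g : E → EReal) : Set (E × ℝ) := {p | g p.1 ≤ (p.2 : EReal)}

/-- Painlevé–Kuratowski sequential outer limit as t ↓ 0. -/
def outerLim {α : Type*} [TopologicalSpace α] (S : ℝ → Set α) : Set α :=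
  {z | ∃ t : ℕ → ℝ, ∃ w : ℕ → α, (∀ k, 0 < t k) ∧ Tendsto t atTop (𝓝 0) ∧
    Tendsto w atTop (𝓝 z) ∧ ∀ k, w k ∈ S (t k)}

/-- Painlevé–Kuratowski sequential inner limit as t ↓ 0. -/
def innerLim {α : Type*} [TopologicalSpace α] (S : ℝ → Set α) : Set α :=
  {z | ∀ t : ℕ → ℝ, (∀ k, 0 < t k) → Tendsto t atTop (𝓝 0) →
    ∃ w : ℕ → α, Tendsto w atTop (𝓝 z) ∧ ∀ᶠ k in atTop, w k ∈ S (t k)}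

/-- Epi-differentiability at a point. -/
def epiDiffAt (φ : E → EReal) (x : E) : Prop :=
  outerLim (fun t => epiSet (fun u => diffQuot φ x t u)) = epiSet (subDeriv φ x) ∧
  innerLim (fun t => epiSet (fun u => diffQuot φ x t u)) = epiSet (subDeriv φ x)

/-- Relative Lipschitz continuity around x w.r.t. Ω with constant ℓ. -/
def RelLipschitzOn (φ : E → EReal) (Ω : Set E) (x : E) (ℓ : ℝ) : Prop :=
  ∃ U ∈ 𝓝 x, ∀ y ∈ Ω ∩ U, ∀ z ∈ Ω ∩ U, φ y - φ z ≤ ((ℓ * ‖y - z‖ : ℝ) : EReal)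

def RelLipschitzAround (φ : E → EReal) (Ω : Set E) (x : E) : Prop :=
  ∃ ℓ : ℝ, 0 ≤ ℓ ∧ RelLipschitzOn φ Ω x ℓ

/-- Local Lipschitz continuity of an extended-real-valued function around x (finite nearby). -/
def LocLipschitzAt (φ : E → EReal) (x : E) : Prop :=
  ∃ ℓ : ℝ, ∃ U ∈ 𝓝 x, (∀ z ∈ U, φ z ≠ ⊤) ∧
    ∀ z ∈ U, ∀ w ∈ U, φ z - φ w ≤ ((ℓ * ‖z - w‖ : ℝ) : EReal)

/-- Dini–Hadamard regularity. -/
def DHRegular (φ : E → EReal) (x : E) : Prop :=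
  ∀ u, sSup ((fun v : E →L[ℝ] ℝ => (v u : EReal)) '' subDiff φ x) = subDeriv φ x u

def weakStarClosure (S : Set (E →L[ℝ] ℝ)) : Set (E →L[ℝ] ℝ) :=
  closure (show Set (WeakDual ℝ E) from S)

def IsWeakStarClosed (S : Set (E →L[ℝ] ℝ)) : Prop :=
  IsClosed (show Set (WeakDual ℝ E) from S)


namespace Aux17

variable {Y : Type*} [NormedAddCommGroup Y] [NormedSpace ℝ Y]

/-- directional distance quotient set -/
def sigSet (Θ : Set Y) (yb : Y) (y : Y) : Set ℝ :=
  (fun t : ℝ => infDist (yb + t • y) Θ / t) '' Ioi 0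

def sig (Θ : Set Y) (yb : Y) (y : Y) : ℝ := sInf (sigSet Θ yb y)

variable {Θ : Set Y} {yb : Y}

lemma sigSet_nonempty (y : Y) : (sigSet Θ yb y).Nonempty :=
  ⟨_, ⟨1, mem_Ioi.2 one_pos, rfl⟩⟩

lemma sigSet_nonneg {y : Y} {z : ℝ} (hz : z ∈ sigSet Θ yb y) : 0 ≤ z := by
  obtain ⟨t, ht, rfl⟩ := hz
  exact div_nonneg infDist_nonneg (le_of_lt ht)

lemma sigSet_bddBelow (y : Y) : BddBelow (sigSet Θ yb y) :=
  ⟨0, fun z hz => sigSet_nonneg hz⟩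

lemma sig_nonneg (y : Y) : 0 ≤ sig Θ yb y :=
  le_csInf (sigSet_nonempty y) fun z hz => sigSet_nonneg hz

lemma sig_le {y : Y} {t : ℝ} (ht : 0 < t) : sig Θ yb y ≤ infDist (yb + t • y) Θ / t :=
  csInf_le (sigSet_bddBelow y) ⟨t, ht, rfl⟩

/-- convexity of infDist -/
lemma infDist_convex (hc : Convex ℝ Θ) (hne : Θ.Nonempty) {a b : ℝ} (ha : 0 ≤ a)
    (hb : 0 ≤ b) (hab : a + b = 1) (x y : Y) :
    infDist (a • x + b • y) Θ ≤ a * infDist x Θ + b * infDist y Θ := by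
  refine le_of_forall_pos_le_add fun ε hε => ?_
  obtain ⟨p, hp, hdp⟩ := (infDist_lt_iff hne).1
    (lt_add_of_pos_right (infDist x Θ) (half_pos hε))
  obtain ⟨q, hq, hdq⟩ := (infDist_lt_iff hne).1
    (lt_add_of_pos_right (infDist y Θ) (half_pos hε))
  have hmem : a • p + b • q ∈ Θ := hc hp hq ha hb hab
  have h1 : infDist (a • x + b • y) Θ ≤ dist (a • x + b • y) (a • p + b • q) :=
    infDist_le_dist_of_mem hmem
  have h2 : dist (a • x + b • y) (a • p + b • q) ≤ a * dist x p + b * dist y q := by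
    rw [dist_eq_norm, dist_eq_norm, dist_eq_norm]
    have : a • x + b • y - (a • p + b • q) = a • (x - p) + b • (y - q) := by
      simp [smul_sub]; abel
    rw [this]
    calc ‖a • (x - p) + b • (y - q)‖ ≤ ‖a • (x - p)‖ + ‖b • (y - q)‖ := norm_add_le _ _
      _ = a * ‖x - p‖ + b * ‖y - q‖ := by
          rw [norm_smul, norm_smul, Real.norm_of_nonneg ha, Real.norm_of_nonneg hb]
  have h3 : a * dist x p + b * dist y q ≤
      a * (infDist x Θ + ε / 2) + b * (infDist y Θ + ε / 2) :=
    add_le_add (mul_le_mul_of_nonneg_left hdp.le ha) (mul_le_mul_of_nonneg_left hdq.le hb)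
  have hsum : a * (ε / 2) + b * (ε / 2) = ε / 2 := by
    rw [← add_mul, hab]; ring
  have h4 : a * (infDist x Θ + ε / 2) + b * (infDist y Θ + ε / 2)
      ≤ a * infDist x Θ + b * infDist y Θ + ε := by nlinarith [hsum]
  linarith

lemma quot_mono (hc : Convex ℝ Θ) (hfeas : yb ∈ Θ) (y : Y) {t s : ℝ} (ht : 0 < t)
    (hts : t ≤ s) : infDist (yb + t • y) Θ / t ≤ infDist (yb + s • y) Θ / s := by
  have hs : 0 < s := lt_of_lt_of_le ht hts
  have hkey : infDist (yb + t • y) Θ ≤ (t / s) * infDist (yb + s • y) Θ := by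
    have hrw : yb + t • y = (1 - t / s) • yb + (t / s) • (yb + s • y) := by
      rw [smul_add, smul_smul, div_mul_cancel₀ _ (ne_of_gt hs), sub_smul, one_smul]
      abel
    have := infDist_convex (Θ := Θ) (a := 1 - t / s) (b := t / s) hc ⟨yb, hfeas⟩
      (by have := div_le_one_of_le₀ hts hs.le; linarith)
      (div_nonneg ht.le hs.le) (by ring) yb (yb + s • y)
    rw [← hrw] at this
    rwa [infDist_zero_of_mem hfeas, mul_zero, zero_add] at this
  rw [div_le_div_iff₀ ht hs]
  calc infDist (yb + t • y) Θ * s ≤ ((t / s) * infDist (yb + s • y) Θ) * s :=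
        mul_le_mul_of_nonneg_right hkey hs.le
    _ = infDist (yb + s • y) Θ * t := by field_simp

lemma sig_zero (hfeas : yb ∈ Θ) : sig Θ yb (0 : Y) = 0 := by
  refine le_antisymm ?_ (sig_nonneg 0)
  have := sig_le (Θ := Θ) (yb := yb) (y := (0:Y)) one_pos
  simpa [infDist_zero_of_mem hfeas] using this

lemma sig_le_norm (hfeas : yb ∈ Θ) (y : Y) : sig Θ yb y ≤ ‖y‖ := by
  have := sig_le (Θ := Θ) (yb := yb) (y := y) one_pos
  have h2 : infDist (yb + (1:ℝ) • y) Θ ≤ ‖y‖ := by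
    have := infDist_le_dist_of_mem (x := yb + (1:ℝ) • y) hfeas
    simpa [dist_eq_norm] using this
  calc sig Θ yb y ≤ infDist (yb + (1:ℝ) • y) Θ / 1 := sig_le one_pos
    _ ≤ ‖y‖ := by simpa using h2

lemma sig_nonpos_of_mem (hfeas : yb ∈ Θ) {z : Y} (hz : z ∈ Θ) : sig Θ yb (z - yb) ≤ 0 := by
  have := sig_le (Θ := Θ) (yb := yb) (y := z - yb) one_pos
  simpa [infDist_zero_of_mem hz] using this

lemma sig_add (hc : Convex ℝ Θ) (hfeas : yb ∈ Θ) (y z : Y) :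
    sig Θ yb (y + z) ≤ sig Θ yb y + sig Θ yb z := by
  refine le_of_forall_pos_le_add fun ε hε => ?_
  obtain ⟨e1, ⟨t1, ht1, rfl⟩, he1⟩ := exists_lt_of_csInf_lt (sigSet_nonempty y)
    (lt_add_of_pos_right (sig Θ yb y) (half_pos hε))
  obtain ⟨e2, ⟨t2, ht2, rfl⟩, he2⟩ := exists_lt_of_csInf_lt (sigSet_nonempty z)
    (lt_add_of_pos_right (sig Θ yb z) (half_pos hε))
  rw [mem_Ioi] at ht1 ht2
  set t : ℝ := min t1 t2 / 2 with htdef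
  have ht : 0 < t := by positivity
  have h2t1 : 2 * t ≤ t1 := by
    have := min_le_left t1 t2; rw [htdef]; linarith
  have h2t2 : 2 * t ≤ t2 := by
    have := min_le_right t1 t2; rw [htdef]; linarith
  have hsplit : yb + t • (y + z) =
      (1/2 : ℝ) • (yb + (2*t) • y) + (1/2 : ℝ) • (yb + (2*t) • z) := by
    rw [smul_add, smul_add, smul_add, smul_smul, smul_smul]
    rw [show (1/2 : ℝ) * (2*t) = t by ring]
    rw [show ((1:ℝ)/2) • yb + t • y + (((1:ℝ)/2) • yb + t • z)
      = (((1:ℝ)/2) • yb + ((1:ℝ)/2) • yb) + (t • y + t • z) by abel]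
    rw [← add_smul]; norm_num
  have hconv : infDist (yb + t • (y + z)) Θ ≤
      (1/2 : ℝ) * infDist (yb + (2*t) • y) Θ + (1/2 : ℝ) * infDist (yb + (2*t) • z) Θ := by
    rw [hsplit]
    exact infDist_convex (Θ := Θ) (a := 1/2) (b := 1/2) hc ⟨yb, hfeas⟩
      (by norm_num) (by norm_num) (by norm_num) _ _
  have hm1 : infDist (yb + (2*t) • y) Θ / (2*t) ≤ infDist (yb + t1 • y) Θ / t1 :=
    quot_mono hc hfeas y (by positivity) h2t1
  have hm2 : infDist (yb + (2*t) • z) Θ / (2*t) ≤ infDist (yb + t2 • z) Θ / t2 :=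
    quot_mono hc hfeas z (by positivity) h2t2
  have hfin : sig Θ yb (y + z) ≤ infDist (yb + t • (y + z)) Θ / t := sig_le ht
  have heq : infDist (yb + t • (y + z)) Θ / t ≤
      infDist (yb + (2*t) • y) Θ / (2*t) + infDist (yb + (2*t) • z) Θ / (2*t) := by
    rw [← add_div, div_le_div_iff₀ ht (by positivity : (0:ℝ) < 2*t)]
    nlinarith [hconv, infDist_nonneg (x := yb + t • (y+z)) (s := Θ)]
  linarith

lemma sig_smul (hc : Convex ℝ Θ) (hfeas : yb ∈ Θ) {c : ℝ} (hcpos : 0 < c) (y : Y) :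
    sig Θ yb (c • y) = c * sig Θ yb y := by
  have key : ∀ (d : ℝ), 0 < d → ∀ w : Y, sig Θ yb (d • w) ≤ d * sig Θ yb w := by
    intro d hd w
    have h1 : ∀ z ∈ sigSet Θ yb w, sig Θ yb (d • w) / d ≤ z := by
      rintro _ ⟨t, ht, rfl⟩
      rw [mem_Ioi] at ht
      show sig Θ yb (d • w) / d ≤ infDist (yb + t • w) Θ / t
      have harg : yb + (t / d) • (d • w) = yb + t • w := by
        rw [smul_smul, div_mul_cancel₀ _ (ne_of_gt hd)]
      have := sig_le (Θ := Θ) (yb := yb) (y := d • w) (t := t / d) (by positivity)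
      rw [harg] at this
      have h3 : infDist (yb + t • w) Θ / (t / d) = infDist (yb + t • w) Θ / t * d := by
        field_simp
      rw [h3] at this
      rwa [div_le_iff₀ hd]
    have h2 : sig Θ yb (d • w) / d ≤ sig Θ yb w := le_csInf (sigSet_nonempty w) h1
    rwa [div_le_iff₀ hd, mul_comm] at h2
  refine le_antisymm (key c hcpos y) ?_
  have := key c⁻¹ (by positivity) (c • y)
  rw [smul_smul, inv_mul_cancel₀ (ne_of_gt hcpos), one_smul] at this
  calc c * sig Θ yb y ≤ c * (c⁻¹ * sig Θ yb (c • y)) := mul_le_mul_of_nonneg_left this hcpos.le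
    _ = sig Θ yb (c • y) := by field_simp

end Aux17

namespace Aux17

lemma ereal_le_of_forall_sub {c : ℝ} {L : EReal} (h : ∀ ε : ℝ, 0 < ε → ((c - ε : ℝ) : EReal) ≤ L) :
    (c : EReal) ≤ L := by
  by_contra hc
  push_neg at hc
  induction L with
  | bot => exact (not_le.2 (EReal.bot_lt_coe (c - 1))) (h 1 one_pos)
  | coe x =>
      rw [EReal.coe_lt_coe_iff] at hc
      have := h ((c - x)/2) (by linarith)
      rw [EReal.coe_le_coe_iff] at this
      linarith
  | top => exact not_top_lt hc

lemma mul_div_le {a b : ℝ} (ha : 0 ≤ a) (hb : 0 ≤ b) : a * (b / (a + 1)) ≤ b := by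
  rw [mul_comm, div_mul_eq_mul_div, div_le_iff₀ (by positivity : (0:ℝ) < a + 1)]
  nlinarith

variable {X : Type*} [NormedAddCommGroup X] [NormedSpace ℝ X]

lemma diffQuot_real (ϑ : X → ℝ) (x : X) (t : ℝ) (u : X) :
    diffQuot (fun x => (ϑ x : EReal)) x t u = ((t⁻¹ * (ϑ (x + t • u) - ϑ x) : ℝ) : EReal) := by
  rw [diffQuot, EReal.coe_mul, EReal.coe_sub]

lemma tendsto_base (xb u : X) :
    Tendsto (fun p : ℝ × X => xb + p.1 • p.2) ((𝓝[>] (0:ℝ)) ×ˢ 𝓝 u) (𝓝 xb) := by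
  have h1 : Tendsto (fun p : ℝ × X => xb + p.1 • p.2) ((𝓝 (0:ℝ)) ×ˢ 𝓝 u)
      (𝓝 (xb + (0:ℝ) • u)) :=
    tendsto_const_nhds.add (tendsto_fst.smul tendsto_snd)
  simpa using h1.mono_left (Filter.prod_mono nhdsWithin_le_nhds le_rfl)

lemma le_subDeriv_of_eventually (ϑ : X → ℝ) (xb u : X) (c : ℝ)
    (h : ∀ ε : ℝ, 0 < ε → ∀ᶠ p in (𝓝[>] (0:ℝ)) ×ˢ 𝓝 u,
      ((c - ε : ℝ) : EReal) ≤ diffQuot (fun x => (ϑ x : EReal)) xb p.1 p.2) :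
    (c : EReal) ≤ subDeriv (fun x => (ϑ x : EReal)) xb u :=
  ereal_le_of_forall_sub fun ε hε => Filter.le_liminf_of_le (by isBoundedDefault) (h ε hε)

lemma subDeriv_le_lip (ϑ : X → ℝ) (xb u : X) {ℓ : ℝ} {U : Set X} (hU : U ∈ 𝓝 xb)
    (hL : ∀ x ∈ U, ∀ y ∈ U, |ϑ x - ϑ y| ≤ ℓ * ‖x - y‖) :
    subDeriv (fun x => (ϑ x : EReal)) xb u ≤ ((ℓ * ‖u‖ : ℝ) : EReal) := by
  set φ : X → EReal := fun x => (ϑ x : EReal)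
  have hmap : Tendsto (fun t : ℝ => (t, u)) (𝓝[>] (0:ℝ)) ((𝓝[>] (0:ℝ)) ×ˢ 𝓝 u) :=
    tendsto_id.prodMk tendsto_const_nhds
  have h1 : subDeriv φ xb u ≤ liminf (fun t => diffQuot φ xb t u) (𝓝[>] (0:ℝ)) := by
    have h := Filter.liminf_le_liminf_of_le (u := fun p : ℝ × X => diffQuot φ xb p.1 p.2) hmap
    rw [← Filter.liminf_comp] at h
    exact h
  have htend : Tendsto (fun t : ℝ => xb + t • u) (𝓝[>] (0:ℝ)) (𝓝 xb) :=
    (tendsto_base xb u).comp hmap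
  have hev : ∀ᶠ t in 𝓝[>] (0:ℝ), diffQuot φ xb t u ≤ ((ℓ * ‖u‖ : ℝ) : EReal) := by
    filter_upwards [self_mem_nhdsWithin, htend.eventually_mem hU] with t ht hmem
    rw [mem_Ioi] at ht
    rw [diffQuot_real, EReal.coe_le_coe_iff]
    have habs : |ϑ (xb + t • u) - ϑ xb| ≤ ℓ * (t * ‖u‖) := by
      have := hL _ hmem _ (mem_of_mem_nhds hU)
      simpa [norm_smul, abs_of_pos ht] using this
    have h2 : ϑ (xb + t • u) - ϑ xb ≤ ℓ * (t * ‖u‖) := (abs_le.1 habs).2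
    calc t⁻¹ * (ϑ (xb + t • u) - ϑ xb) ≤ t⁻¹ * (ℓ * (t * ‖u‖)) :=
          mul_le_mul_of_nonneg_left h2 (by positivity)
      _ = ℓ * ‖u‖ := by field_simp
  exact h1.trans ((Filter.liminf_le_limsup).trans (Filter.limsup_le_of_le (h := hev)))

end Aux17

set_option maxHeartbeats 2000000

/-- dual necessary optimality conditions with bounded multipliers
under the metric subregularity constraint qualification. -/
theorem dual_necessary_optimality_bounded_multipliers
    {X Y : Type*} [NormedAddCommGroup X] [NormedSpace ℝ X]
    [NormedAddCommGroup Y] [NormedSpace ℝ Y]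
    (ϑ : X → ℝ) (f : X → Y) (f' : X →L[ℝ] Y) (Θ : Set Y) (xb : X) (ℓ κ : ℝ)
    (hℓ : 0 ≤ ℓ)
    (hϑlip : ∃ U ∈ 𝓝 xb, ∀ x ∈ U, ∀ y ∈ U, |ϑ x - ϑ y| ≤ ℓ * ‖x - y‖)
    (hϑreg : DHRegular (fun x => (ϑ x : EReal)) xb)
    (hf : ContDiffAt ℝ 1 f xb) (hf' : HasFDerivAt f f' xb)
    (hΘconv : Convex ℝ Θ) (hΘloc : ∃ V ∈ 𝓝 (f xb), IsClosed (Θ ∩ V))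
    (hfeas : f xb ∈ Θ)
    (hκ : 0 < κ)
    (hMSCQ : ∃ U ∈ 𝓝 xb, ∀ x ∈ U, infDist x {x' | f x' ∈ Θ} ≤ κ * infDist (f x) Θ)
    (hmin : ∃ U ∈ 𝓝 xb, ∀ x ∈ U, f x ∈ Θ → ϑ xb ≤ ϑ x) :
    ∃ lam : Y →L[ℝ] ℝ,
      (∃ v ∈ subDiff (fun x => (ϑ x : EReal)) xb, v + lam.comp f' = 0) ∧
      lam ∈ convNormal Θ (f xb) ∧ ‖lam‖ ≤ ℓ * κ := by
  classical
  set φ : X → EReal := fun x => ((ϑ x : ℝ) : EReal) with hφdef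
  set lk : ℝ := ℓ * κ with hlkdef
  have hlk : 0 ≤ lk := mul_nonneg hℓ hκ.le
  set σ : Y → ℝ := Aux17.sig Θ (f xb) with hσdef
  obtain ⟨Ul, hUl, hLip⟩ := hϑlip
  -- Step 1 : exact penalization
  have hpen : ∃ U ∈ 𝓝 xb, ∀ x ∈ U, ϑ xb ≤ ϑ x + lk * infDist (f x) Θ := by
    obtain ⟨Um, hUm, hMin⟩ := hmin
    obtain ⟨Us, hUs, hS⟩ := hMSCQ
    obtain ⟨ρ, hρpos, hball⟩ := Metric.mem_nhds_iff.1 (inter_mem hUl hUm)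
    have hfc : ContinuousAt f xb := hf'.continuousAt
    have h2 : ∀ᶠ x in 𝓝 xb, ‖f x - f xb‖ < ρ / (3 * (κ + 1)) := by
      have := hfc.tendsto.eventually_mem (ball_mem_nhds (f xb) (show (0:ℝ) < ρ / (3*(κ+1)) by positivity))
      filter_upwards [this] with x hx
      simpa [mem_ball, dist_eq_norm] using hx
    refine ⟨ball xb (min (ρ/3) 1) ∩ Us ∩ {x | ‖f x - f xb‖ < ρ/(3*(κ+1))},
      inter_mem (inter_mem (ball_mem_nhds _ (by positivity)) hUs) h2, ?_⟩
    rintro x ⟨⟨hx1, hx2⟩, hx3⟩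
    refine le_of_forall_pos_le_add fun ε hε => ?_
    set δ : ℝ := min (ρ/3) (ε/(ℓ+1)) with hδdef
    have hδpos : 0 < δ := by positivity
    have hΩne : ({x' | f x' ∈ Θ} : Set X).Nonempty := ⟨xb, hfeas⟩
    have hdist : infDist x {x' | f x' ∈ Θ} ≤ κ * infDist (f x) Θ := hS x hx2
    obtain ⟨x', hx'Ω, hxx'⟩ := (infDist_lt_iff hΩne).1
      (lt_of_le_of_lt hdist (lt_add_of_pos_right _ hδpos))
    have hinf_le : infDist (f x) Θ ≤ ‖f x - f xb‖ := by
      simpa [dist_eq_norm] using infDist_le_dist_of_mem (x := f x) hfeas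
    have hinf_nonneg : (0:ℝ) ≤ infDist (f x) Θ := infDist_nonneg
    have hκb : κ * infDist (f x) Θ ≤ ρ/3 := by
      have h4 : κ * infDist (f x) Θ ≤ κ * (ρ/(3*(κ+1))) :=
        mul_le_mul_of_nonneg_left (hinf_le.trans hx3.le) hκ.le
      have h5 : κ * (ρ/(3*(κ+1))) ≤ ρ/3 := by
        rw [mul_comm, div_mul_eq_mul_div, div_le_div_iff₀ (by positivity : (0:ℝ) < 3*(κ+1)) (by norm_num : (0:ℝ) < 3)]
        nlinarith
      linarith
    have hx'ball : x' ∈ ball xb ρ := by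
      rw [mem_ball]
      have hd1 : dist x' xb ≤ dist x' x + dist x xb := dist_triangle _ _ _
      have hd2 : dist x xb < min (ρ/3) 1 := mem_ball.1 hx1
      have hd3 : dist x' x < κ * infDist (f x) Θ + δ := by rwa [dist_comm]
      calc dist x' xb ≤ dist x' x + dist x xb := hd1
        _ < (κ * infDist (f x) Θ + δ) + min (ρ/3) 1 := by linarith [hd3, hd2]
        _ ≤ ρ/3 + ρ/3 + ρ/3 := by
            have := min_le_left (ρ/3) (1:ℝ)
            have := min_le_left (ρ/3) (ε/(ℓ+1))
            linarith [hκb]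
        _ = ρ := by ring
    have hxball : x ∈ ball xb ρ := by
      rw [mem_ball]
      have := mem_ball.1 hx1
      have h6 : min (ρ/3) 1 ≤ ρ := le_trans (min_le_left _ _) (by linarith)
      linarith
    have hx'mem := hball hx'ball
    have hxmem := hball hxball
    have hmin' : ϑ xb ≤ ϑ x' := hMin x' hx'mem.2 hx'Ω
    have hlip' : ϑ x' - ϑ x ≤ ℓ * ‖x' - x‖ :=
      (abs_le.1 (hLip x' hx'mem.1 x hxmem.1)).2
    have hnorm : ‖x' - x‖ < κ * infDist (f x) Θ + δ := by
      rwa [dist_comm, dist_eq_norm] at hxx'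
    have hεb : ℓ * δ ≤ ε := by
      have h7 : δ ≤ ε/(ℓ+1) := min_le_right _ _
      have h8 : ℓ * δ ≤ ℓ * (ε/(ℓ+1)) := mul_le_mul_of_nonneg_left h7 hℓ
      have h9 : ℓ * (ε/(ℓ+1)) ≤ ε := Aux17.mul_div_le hℓ hε.le
      linarith
    have h10 : ℓ * ‖x' - x‖ ≤ ℓ * (κ * infDist (f x) Θ + δ) :=
      mul_le_mul_of_nonneg_left hnorm.le hℓ
    have h11 : ℓ * (κ * infDist (f x) Θ + δ) = lk * infDist (f x) Θ + ℓ * δ := by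
      rw [hlkdef]; ring
    linarith
  obtain ⟨Up, hUp, hPen⟩ := hpen
  -- Step 2 : two-sided Lipschitz bounds on the subderivative
  have hupper : ∀ u, subDeriv φ xb u ≤ ((ℓ * ‖u‖ : ℝ) : EReal) :=
    fun u => Aux17.subDeriv_le_lip ϑ xb u hUl hLip
  have hlower : ∀ u : X, ((-(ℓ * ‖u‖) : ℝ) : EReal) ≤ subDeriv φ xb u := by
    intro u
    apply Aux17.le_subDeriv_of_eventually
    intro ε hε
    have hball' : ∀ᶠ x in 𝓝 u, x ∈ ball u (ε/(ℓ+1)) :=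
      Filter.eventually_mem_set.2 (ball_mem_nhds _ (by positivity))
    filter_upwards [Filter.Eventually.prod_inl (eventually_mem_nhdsWithin) (𝓝 u),
      (Aux17.tendsto_base xb u).eventually_mem hUl,
      Filter.Eventually.prod_inr hball' (𝓝[>] (0:ℝ))] with p hp1 hp2 hp3
    obtain ⟨t, u'⟩ := p
    simp only [] at hp1 hp2 hp3 ⊢
    have ht : 0 < t := hp1
    rw [Aux17.diffQuot_real, EReal.coe_le_coe_iff]
    have habs : |ϑ (xb + t • u') - ϑ xb| ≤ ℓ * (t * ‖u'‖) := by
      simpa [norm_smul, abs_of_pos ht] using hLip _ hp2 _ (mem_of_mem_nhds hUl)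
    have h1 : -(ℓ * (t * ‖u'‖)) ≤ ϑ (xb + t • u') - ϑ xb := (abs_le.1 habs).1
    have h2 : t⁻¹ * -(ℓ * (t * ‖u'‖)) ≤ t⁻¹ * (ϑ (xb + t • u') - ϑ xb) :=
      mul_le_mul_of_nonneg_left h1 (by positivity)
    have h3 : t⁻¹ * -(ℓ * (t * ‖u'‖)) = -(ℓ * ‖u'‖) := by field_simp
    have h4 : ‖u'‖ ≤ ‖u‖ + ε/(ℓ+1) := by
      have h5 : ‖u'‖ - ‖u‖ ≤ ‖u' - u‖ := norm_sub_norm_le _ _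
      have h6 : ‖u' - u‖ < ε/(ℓ+1) := by rwa [mem_ball, dist_eq_norm] at hp3
      linarith
    have h7 : ℓ * ‖u'‖ ≤ ℓ * ‖u‖ + ε := by
      have := mul_le_mul_of_nonneg_left h4 hℓ
      have := Aux17.mul_div_le hℓ hε.le
      nlinarith
    linarith [h2, h3.symm.trans_le h2]
  -- Step 3 : the real-valued subderivative r
  set r : X → ℝ := fun u => (subDeriv φ xb u).toReal with hrdef
  have hrcoe : ∀ u, ((r u : ℝ) : EReal) = subDeriv φ xb u := by
    intro u
    refine EReal.coe_toReal ?_ ?_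
    · exact ((hupper u).trans_lt (EReal.coe_lt_top _)).ne
    · exact ((EReal.bot_lt_coe _).trans_le (hlower u)).ne'
  have hr_le : ∀ u, r u ≤ ℓ * ‖u‖ := fun u =>
    EReal.coe_le_coe_iff.1 ((hrcoe u).le.trans (hupper u))
  have hr_ge : ∀ u, -(ℓ * ‖u‖) ≤ r u := fun u =>
    EReal.coe_le_coe_iff.1 ((hlower u).trans (hrcoe u).ge)
  have hr0 : r 0 = 0 := le_antisymm (by simpa using hr_le 0) (by simpa using hr_ge 0)
  -- Step 4 : key inequality  -(lk * σ (f' u)) ≤ r u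
  have hkey0 : ∀ (u : X) (s : ℝ), 0 < s →
      -(lk * (infDist (f xb + s • (f' u)) Θ / s)) ≤ r u := by
    intro u s hs
    set D : ℝ := infDist (f xb + s • (f' u)) Θ / s with hDdef
    have hle : ((-(lk * D) : ℝ) : EReal) ≤ subDeriv φ xb u := by
      apply Aux17.le_subDeriv_of_eventually
      intro ε hε
      obtain ⟨c1, hc1pos, hc1e⟩ : ∃ c1 : ℝ, 0 < c1 ∧ c1 * (‖u‖ + 1) = ε / (2*(lk+1)) :=
        ⟨ε / (2*(lk+1)) / (‖u‖ + 1), by positivity, by field_simp⟩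
      obtain ⟨c2, hc2pos, hc2e⟩ : ∃ c2 : ℝ, 0 < c2 ∧ (‖f'‖ + 1) * c2 = ε / (2*(lk+1)) :=
        ⟨ε / (2*(lk+1)) / (‖f'‖ + 1), by positivity, by field_simp⟩
      have hlo := (Asymptotics.isLittleO_iff.1 (hasFDerivAt_iff_isLittleO_nhds_zero.1 hf')) hc1pos
      have htsmul : Tendsto (fun p : ℝ × X => p.1 • p.2) ((𝓝[>] (0:ℝ)) ×ˢ 𝓝 u) (𝓝 0) := by
        have h1 : Tendsto (fun p : ℝ × X => p.1 • p.2) ((𝓝 (0:ℝ)) ×ˢ 𝓝 u) (𝓝 ((0:ℝ) • u)) :=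
          tendsto_fst.smul tendsto_snd
        simpa using h1.mono_left (Filter.prod_mono nhdsWithin_le_nhds le_rfl)
      have hev4 := htsmul.eventually hlo
      have hevlt : ∀ᶠ t in 𝓝[>] (0:ℝ), t < s :=
        (Filter.eventually_mem_set.2 (Iio_mem_nhds hs)).filter_mono nhdsWithin_le_nhds
      have hball' : ∀ᶠ x in 𝓝 u, x ∈ ball u (min c2 1) :=
        Filter.eventually_mem_set.2 (ball_mem_nhds _ (by positivity))
      filter_upwards [Filter.Eventually.prod_inl (eventually_mem_nhdsWithin) (𝓝 u),
        Filter.Eventually.prod_inl hevlt (𝓝 u),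
        (Aux17.tendsto_base xb u).eventually_mem hUp,
        Filter.Eventually.prod_inr hball' (𝓝[>] (0:ℝ)), hev4] with p hp1 hplt hp2 hp3 hp4
      obtain ⟨t, u'⟩ := p
      simp only [] at hp1 hplt hp2 hp3 hp4 ⊢
      have ht : 0 < t := hp1
      rw [Aux17.diffQuot_real, EReal.coe_le_coe_iff]
      -- norms of u'
      have hu'1 : ‖u'‖ ≤ ‖u‖ + 1 := by
        have h5 : ‖u'‖ - ‖u‖ ≤ ‖u' - u‖ := norm_sub_norm_le _ _
        have h6 : ‖u' - u‖ < min c2 1 := by rwa [mem_ball, dist_eq_norm] at hp3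
        have := min_le_right c2 1
        linarith
      have hu'2 : ‖u' - u‖ ≤ c2 := by
        have h6 : ‖u' - u‖ < min c2 1 := by rwa [mem_ball, dist_eq_norm] at hp3
        have := min_le_left c2 1
        linarith
      set d : ℝ := infDist (f (xb + t • u')) Θ with hddef
      have hd0 : 0 ≤ d := infDist_nonneg
      have hpen' : ϑ xb ≤ ϑ (xb + t • u') + lk * d := hPen _ hp2
      have hd1 : d ≤ infDist (f xb + t • (f' u)) Θ + dist (f (xb + t • u')) (f xb + t • (f' u)) :=
        infDist_le_infDist_add_dist
      have hA : ‖f (xb + t • u') - f xb - f' (t • u')‖ ≤ c1 * (t * ‖u'‖) := by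
        have := hp4
        rwa [norm_smul, Real.norm_of_nonneg ht.le] at this
      have hB : ‖f' (t • u') - t • (f' u)‖ ≤ t * ((‖f'‖ + 1) * c2) := by
        have heq : f' (t • u') - t • (f' u) = f' (t • (u' - u)) := by
          simp [map_smul, map_sub, smul_sub]
        rw [heq]
        calc ‖f' (t • (u' - u))‖ ≤ ‖f'‖ * ‖t • (u' - u)‖ := f'.le_opNorm _
          _ = ‖f'‖ * (t * ‖u' - u‖) := by rw [norm_smul, Real.norm_of_nonneg ht.le]
          _ ≤ t * ((‖f'‖ + 1) * c2) := by
              have hA1 : t * ‖u' - u‖ ≤ t * c2 := mul_le_mul_of_nonneg_left hu'2 ht.le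
              have hA2 : ‖f'‖ * (t * ‖u' - u‖) ≤ ‖f'‖ * (t * c2) :=
                mul_le_mul_of_nonneg_left hA1 (norm_nonneg _)
              have hA3 : ‖f'‖ * (t * c2) ≤ (‖f'‖ + 1) * (t * c2) :=
                mul_le_mul_of_nonneg_right (by linarith) (by positivity)
              have hA4 : (‖f'‖ + 1) * (t * c2) = t * ((‖f'‖ + 1) * c2) := by ring
              linarith
      have hdist2 : dist (f (xb + t • u')) (f xb + t • (f' u)) ≤
          c1 * (t * ‖u'‖) + t * ((‖f'‖ + 1) * c2) := by
        rw [dist_eq_norm]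
        have heq2 : f (xb + t • u') - (f xb + t • (f' u)) =
            (f (xb + t • u') - f xb - f' (t • u')) + (f' (t • u') - t • (f' u)) := by abel
        rw [heq2]
        exact (norm_add_le _ _).trans (add_le_add hA hB)
      have hmon : infDist (f xb + t • (f' u)) Θ ≤ t * D := by
        have := Aux17.quot_mono hΘconv hfeas (f' u) ht hplt.le
        rw [div_le_iff₀ ht] at this
        rw [hDdef]
        linarith [this]
      -- combine
      have hdle : d ≤ t * (D + ε / (lk+1)) := by
        have h12 : c1 * (t * ‖u'‖) ≤ t * (ε / (2*(lk+1))) := by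
          rw [← hc1e]
          have h12a : c1 * ‖u'‖ ≤ c1 * (‖u‖ + 1) := mul_le_mul_of_nonneg_left hu'1 hc1pos.le
          have h12b : t * (c1 * ‖u'‖) ≤ t * (c1 * (‖u‖ + 1)) := mul_le_mul_of_nonneg_left h12a ht.le
          nlinarith [h12b]
        have h13 : t * ((‖f'‖ + 1) * c2) = t * (ε / (2*(lk+1))) := by rw [hc2e]
        have : d ≤ t * D + t * (ε / (2*(lk+1))) + t * (ε / (2*(lk+1))) := by
          linarith [hd1, hdist2, hmon, h12, h13.le]
        have h14 : t * (ε / (2*(lk+1))) + t * (ε / (2*(lk+1))) = t * (ε/(lk+1)) := by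
          rw [← mul_add]
          congr 1
          field_simp
          ring
        linarith
      have hq1 : -(lk * d) ≤ ϑ (xb + t • u') - ϑ xb := by linarith
      have hq2 : t⁻¹ * -(lk * d) ≤ t⁻¹ * (ϑ (xb + t • u') - ϑ xb) :=
        mul_le_mul_of_nonneg_left hq1 (by positivity)
      have hq3 : -(lk * (D + ε/(lk+1))) ≤ t⁻¹ * -(lk * d) := by
        have h15 : t⁻¹ * d ≤ D + ε/(lk+1) := by
          rw [inv_mul_le_iff₀ ht]
          linarith [hdle]
        have h16 : lk * (t⁻¹ * d) ≤ lk * (D + ε/(lk+1)) := mul_le_mul_of_nonneg_left h15 hlk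
        have h17 : t⁻¹ * -(lk * d) = -(lk * (t⁻¹ * d)) := by ring
        linarith [h16, h17.le]
      have hq4 : lk * (ε/(lk+1)) ≤ ε := Aux17.mul_div_le hlk hε.le
      have hq5 : -(lk * D) - ε ≤ -(lk * (D + ε/(lk+1))) := by
        have : lk * (D + ε/(lk+1)) = lk * D + lk * (ε/(lk+1)) := by ring
        linarith
      linarith
    rw [← hrcoe u] at hle
    exact EReal.coe_le_coe_iff.1 hle
  have hkey : ∀ u : X, -(lk * σ (f' u)) ≤ r u := by
    intro u
    rcases eq_or_lt_of_le hlk with h0 | hpos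
    · have := hkey0 u 1 one_pos
      rw [← h0] at this ⊢
      simpa using this
    · have hlb : ∀ z ∈ Aux17.sigSet Θ (f xb) (f' u), -(r u) / lk ≤ z := by
        rintro _ ⟨t, ht, rfl⟩
        rw [mem_Ioi] at ht
        show -(r u) / lk ≤ infDist (f xb + t • f' u) Θ / t
        have h18 := hkey0 u t ht
        rw [div_le_iff₀ hpos, mul_comm]
        linarith [h18]
      have h2 : -(r u) / lk ≤ σ (f' u) := le_csInf (Aux17.sigSet_nonempty _) hlb
      rw [div_le_iff₀ hpos] at h2
      linarith
  -- Step 5 : sublinearity of r via DH regularity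
  have hsub_le : ∀ (u : X) (b : ℝ), (∀ v ∈ subDiff φ xb, v u ≤ b) → r u ≤ b := by
    intro u b hb
    have h1 : subDeriv φ xb u ≤ ((b : ℝ) : EReal) := by
      rw [← hϑreg u]
      apply sSup_le
      rintro _ ⟨v, hv, rfl⟩
      exact EReal.coe_le_coe_iff.2 (hb v hv)
    exact EReal.coe_le_coe_iff.1 ((hrcoe u).le.trans h1)
  have hvler : ∀ v ∈ subDiff φ xb, ∀ u : X, v u ≤ r u := by
    intro v hv u
    have h := hv u
    rw [← hrcoe u] at h
    exact EReal.coe_le_coe_iff.1 h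
  have hr_add : ∀ u w : X, r (u + w) ≤ r u + r w := by
    intro u w
    apply hsub_le
    intro v hv
    rw [map_add]
    exact add_le_add (hvler v hv u) (hvler v hv w)
  have hr_smul_le : ∀ (c : ℝ), 0 < c → ∀ u, r (c • u) ≤ c * r u := by
    intro c hc u
    apply hsub_le
    intro v hv
    rw [map_smul, smul_eq_mul]
    exact mul_le_mul_of_nonneg_left (hvler v hv u) hc.le
  have hr_smul : ∀ (c : ℝ), 0 < c → ∀ u, r (c • u) = c * r u := by
    intro c hc u
    refine le_antisymm (hr_smul_le c hc u) ?_
    have h := hr_smul_le c⁻¹ (by positivity) (c • u)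
    rw [smul_smul, inv_mul_cancel₀ hc.ne', one_smul] at h
    calc c * r u ≤ c * (c⁻¹ * r (c • u)) := mul_le_mul_of_nonneg_left h hc.le
      _ = r (c • u) := by field_simp
  -- Step 6 : the penalty sublinear function q
  set q : X → ℝ := fun a => lk * σ (f' (-a)) with hqdef
  have hq0 : q 0 = 0 := by
    show lk * σ (f' (-0)) = 0
    rw [neg_zero, map_zero, hσdef, Aux17.sig_zero hfeas, mul_zero]
  have hq_add : ∀ a b : X, q (a + b) ≤ q a + q b := by
    intro a b
    show lk * σ (f' (-(a+b))) ≤ lk * σ (f' (-a)) + lk * σ (f' (-b))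
    have h1 : f' (-(a+b)) = f' (-a) + f' (-b) := by rw [← map_add, neg_add]
    rw [h1]
    have h2 := Aux17.sig_add hΘconv hfeas (f' (-a)) (f' (-b))
    have h3 := mul_le_mul_of_nonneg_left h2 hlk
    rw [hσdef]
    linarith [h3, (mul_add lk (Aux17.sig Θ (f xb) (f' (-a))) (Aux17.sig Θ (f xb) (f' (-b)))).le]
  have hq_smul : ∀ (c : ℝ), 0 < c → ∀ a, q (c • a) = c * q a := by
    intro c hc a
    show lk * σ (f' (-(c • a))) = c * (lk * σ (f' (-a)))
    have h1 : f' (-(c • a)) = c • (f' (-a)) := by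
      rw [← smul_neg, map_smul]
    rw [h1, hσdef, Aux17.sig_smul hΘconv hfeas hc]
    ring
  have hkeyq : ∀ a : X, -(q a) ≤ r (-a) := fun a => hkey (-a)
  -- Step 7 : the infimal convolution sfn
  set SS : X → Set ℝ := fun u => (fun a : X => r (u - a) + q a) '' univ with hSSdef
  have hSSne : ∀ u, (SS u).Nonempty := fun u => ⟨_, 0, mem_univ 0, rfl⟩
  have hSSlb : ∀ u, ∀ z ∈ SS u, -(r (-u)) ≤ z := by
    rintro u _ ⟨a, -, rfl⟩
    have h1 : -(q a) ≤ r (-a) := hkeyq a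
    have h2 : r (-a) ≤ r (-u) + r (u - a) := by
      have h := hr_add (-u) (u - a)
      rw [show -u + (u - a) = -a by abel] at h
      exact h
    show -(r (-u)) ≤ r (u - a) + q a
    linarith
  have hsbdd : ∀ u, BddBelow (SS u) := fun u => ⟨_, fun z hz => hSSlb u z hz⟩
  set sfn : X → ℝ := fun u => sInf (SS u) with hsfndef
  have hs_le : ∀ u a : X, sfn u ≤ r (u - a) + q a := fun u a =>
    csInf_le (hsbdd u) ⟨a, mem_univ a, rfl⟩
  have hs_le_r : ∀ u, sfn u ≤ r u := by
    intro u
    have h := hs_le u 0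
    rwa [sub_zero, hq0, add_zero] at h
  have hs_le_q : ∀ u, sfn u ≤ q u := by
    intro u
    have h := hs_le u u
    rwa [sub_self, hr0, zero_add] at h
  have hs0 : (0:ℝ) ≤ sfn 0 := by
    refine le_csInf (hSSne 0) ?_
    rintro _ ⟨a, -, rfl⟩
    have h1 := hkeyq a
    show (0:ℝ) ≤ r (0 - a) + q a
    rw [zero_sub]
    linarith
  have hs_add : ∀ u w : X, sfn (u + w) ≤ sfn u + sfn w := by
    intro u w
    refine le_of_forall_pos_le_add fun ε hε => ?_
    obtain ⟨_, ⟨a, -, rfl⟩, ha⟩ := exists_lt_of_csInf_lt (hSSne u)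
      (lt_add_of_pos_right _ (half_pos hε))
    obtain ⟨_, ⟨b, -, rfl⟩, hb⟩ := exists_lt_of_csInf_lt (hSSne w)
      (lt_add_of_pos_right _ (half_pos hε))
    have h1 : sfn (u + w) ≤ r (u + w - (a + b)) + q (a + b) := hs_le _ _
    have h2 : r (u + w - (a + b)) ≤ r (u - a) + r (w - b) := by
      have h := hr_add (u - a) (w - b)
      rw [show u - a + (w - b) = u + w - (a + b) by abel] at h
      exact h
    have h3 : q (a + b) ≤ q a + q b := hq_add a b
    simp only [] at ha hb
    linarith
  have hs_smul : ∀ (c : ℝ), 0 < c → ∀ u, sfn (c • u) = c * sfn u := by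
    have hle' : ∀ (d : ℝ), 0 < d → ∀ w, sfn (d • w) ≤ d * sfn w := by
      intro d hd w
      have h1 : ∀ z ∈ SS w, sfn (d • w) / d ≤ z := by
        rintro _ ⟨a, -, rfl⟩
        show sfn (d • w) / d ≤ r (w - a) + q a
        have h2 : sfn (d • w) ≤ r (d • w - d • a) + q (d • a) := hs_le _ _
        have h3 : r (d • w - d • a) = d * r (w - a) := by
          rw [← smul_sub]; exact hr_smul d hd _
        have h4 : q (d • a) = d * q a := hq_smul d hd a
        rw [div_le_iff₀ hd]
        rw [h3, h4] at h2
        linarith [h2, (by ring : d * r (w - a) + d * q a = (r (w - a) + q a) * d)]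
      have h5 := le_csInf (hSSne w) h1
      rw [div_le_iff₀ hd] at h5
      rw [mul_comm]
      exact h5
    intro c hc u
    refine le_antisymm (hle' c hc u) ?_
    have h := hle' c⁻¹ (by positivity) (c • u)
    rw [smul_smul, inv_mul_cancel₀ hc.ne', one_smul] at h
    calc c * sfn u ≤ c * (c⁻¹ * sfn (c • u)) := mul_le_mul_of_nonneg_left h hc.le
      _ = sfn (c • u) := by field_simp
  -- Step 8 : first Hahn-Banach extension
  obtain ⟨w, hw0, hwle⟩ := exists_extension_of_le_sublinear (⟨⊥, 0⟩ : X →ₗ.[ℝ] ℝ) sfn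
    (fun c hc x => hs_smul c hc x) hs_add
    (fun x => by
      have hx : (x : X) = 0 := (Submodule.mem_bot ℝ).1 x.2
      show (0 : (⊥ : Submodule ℝ X) →ₗ[ℝ] ℝ) x ≤ sfn ↑x
      rw [LinearMap.zero_apply, hx]
      exact hs0)
  have hwbound : ∀ u, |w u| ≤ ℓ * ‖u‖ := by
    intro u
    rw [abs_le]
    constructor
    · have h1 : w (-u) ≤ sfn (-u) := hwle _
      have h2 : sfn (-u) ≤ r (-u) := hs_le_r _
      have h3 : r (-u) ≤ ℓ * ‖-u‖ := hr_le _
      rw [map_neg] at h1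
      rw [norm_neg] at h3
      linarith
    · exact (hwle u).trans ((hs_le_r u).trans (hr_le u))
  set W : X →L[ℝ] ℝ := LinearMap.mkContinuous w ℓ
    (fun u => by rw [Real.norm_eq_abs]; exact hwbound u) with hWdef
  have hWapp : ∀ u, W u = w u := fun u => rfl
  have hWmem : W ∈ subDiff φ xb := by
    intro u
    have h1 : w u ≤ r u := (hwle u).trans (hs_le_r u)
    rw [← hrcoe u]
    exact EReal.coe_le_coe_iff.2 h1
  -- Step 9 : factor -w through the range of f'
  set fL : X →ₗ[ℝ] Y := (f' : X →ₗ[ℝ] Y) with hfLdef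
  have hker : LinearMap.ker fL ≤ LinearMap.ker (-w) := by
    intro a ha
    rw [LinearMap.mem_ker] at ha ⊢
    have hfa : f' a = 0 := ha
    have hq1 : q a = 0 := by
      show lk * σ (f' (-a)) = 0
      rw [map_neg, hfa, neg_zero, hσdef, Aux17.sig_zero hfeas, mul_zero]
    have hq2 : q (-a) = 0 := by
      show lk * σ (f' (- -a)) = 0
      rw [neg_neg, hfa, hσdef, Aux17.sig_zero hfeas, mul_zero]
    have h1 : w a ≤ 0 := ((hwle a).trans (hs_le_q a)).trans_eq hq1
    have h2 : w (-a) ≤ 0 := ((hwle (-a)).trans (hs_le_q (-a))).trans_eq hq2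
    rw [map_neg] at h2
    rw [LinearMap.neg_apply]
    have : w a = 0 := le_antisymm h1 (by linarith)
    rw [this, neg_zero]
  set Fr : LinearMap.range fL →ₗ[ℝ] ℝ :=
    ((LinearMap.ker fL).liftQ (-w) hker).comp fL.quotKerEquivRange.symm.toLinearMap with hFrdef
  have hFr : ∀ (a : X) (h : fL a ∈ LinearMap.range fL), Fr ⟨fL a, h⟩ = -(w a) := by
    intro a h
    show ((LinearMap.ker fL).liftQ (-w) hker) (fL.quotKerEquivRange.symm ⟨fL a, h⟩) = -(w a)
    rw [LinearMap.quotKerEquivRange_symm_apply_image, Submodule.mkQ_apply, Submodule.liftQ_apply]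
    rw [LinearMap.neg_apply]
  -- Step 10 : second Hahn-Banach extension on Y
  obtain ⟨g, hg1, hg2⟩ := exists_extension_of_le_sublinear
    (⟨LinearMap.range fL, Fr⟩ : Y →ₗ.[ℝ] ℝ) (fun y => lk * σ y)
    (fun c hc y => by
      show lk * Aux17.sig Θ (f xb) (c • y) = c * (lk * Aux17.sig Θ (f xb) y)
      rw [Aux17.sig_smul hΘconv hfeas hc]; ring)
    (fun y z => by
      show lk * Aux17.sig Θ (f xb) (y + z) ≤
        lk * Aux17.sig Θ (f xb) y + lk * Aux17.sig Θ (f xb) z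
      have h2 := mul_le_mul_of_nonneg_left (Aux17.sig_add hΘconv hfeas y z) hlk
      linarith [h2, (mul_add lk (Aux17.sig Θ (f xb) y) (Aux17.sig Θ (f xb) z)).le])
    (by
      rintro ⟨y, hy⟩
      obtain ⟨a, ha⟩ := hy
      have hyeq : (⟨y, ⟨a, ha⟩⟩ : LinearMap.range fL) = ⟨fL a, LinearMap.mem_range_self fL a⟩ :=
        Subtype.ext ha.symm
      show Fr ⟨y, ⟨a, ha⟩⟩ ≤ lk * σ y
      rw [hyeq, hFr a]
      have h1 : w (-a) ≤ q (-a) := (hwle _).trans (hs_le_q _)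
      rw [map_neg] at h1
      have h2 : q (-a) = lk * σ (f' a) := by show lk * σ (f' (- -a)) = _; rw [neg_neg]
      have h3 : f' a = y := ha
      rw [h2, h3] at h1
      linarith)
  have hgb : ∀ y, |g y| ≤ lk * ‖y‖ := by
    intro y
    rw [abs_le]
    have hb1 : ∀ z : Y, g z ≤ lk * ‖z‖ := by
      intro z
      exact (hg2 z).trans (mul_le_mul_of_nonneg_left (Aux17.sig_le_norm hfeas z) hlk)
    constructor
    · have h1 := hb1 (-y)
      rw [map_neg, norm_neg] at h1
      linarith
    · exact hb1 y
  set lam : Y →L[ℝ] ℝ := LinearMap.mkContinuous g lk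
    (fun y => by rw [Real.norm_eq_abs]; exact hgb y) with hlamdef
  have hlamapp : ∀ y, lam y = g y := fun y => rfl
  refine ⟨lam, ⟨W, hWmem, ?_⟩, ?_, ?_⟩
  · ext u
    have h2 : g (fL u) = Fr ⟨fL u, LinearMap.mem_range_self fL u⟩ :=
      hg1 ⟨fL u, LinearMap.mem_range_self fL u⟩
    have h3 : Fr ⟨fL u, LinearMap.mem_range_self fL u⟩ = -(w u) := hFr u _
    show W u + lam (f' u) = 0
    rw [hWapp, hlamapp]
    have h4 : (f' u : Y) = fL u := rfl
    rw [h4, h2, h3]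
    ring
  · intro z hz
    show lam (z - f xb) ≤ 0
    rw [hlamapp]
    have h1 : g (z - f xb) ≤ lk * σ (z - f xb) := hg2 _
    have h2 : σ (z - f xb) ≤ 0 := Aux17.sig_nonpos_of_mem hfeas hz
    have h3 : lk * σ (z - f xb) ≤ 0 := mul_nonpos_of_nonneg_of_nonpos hlk h2
    linarith
  · exact LinearMap.mkContinuous_norm_le g hlk _
end
end

section
/- Let X and Y be normed spaces and let x̄ be a local minimizer of the problem: minimize ϑ(x) subject to f(x) ∈ Θ, where ϑ : X → ℝ is continuously differentiable around x̄, f : X → Y is continuously differentiable around x̄, Θ ⊂ Y is convex and locally closed around ȳ := f(x̄) ∈ Θ, and there exist κ > 0 and a neighborhood U of x̄ with dist(x; Ω) ≤ κ·dist(f(x); Θ) for all x ∈ U, where Ω := {x ∈ X : f(x) ∈ Θ}. Then there exists λ ∈ Y* such that ∇ϑ(x̄) + ∇f(x̄)*λ = 0, λ ∈ N_Θ(ȳ), and ‖λ‖ ≤ κ‖∇ϑ(x̄)‖. -/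
open Filter Topology Set Metric Pointwise

noncomputable section

variable {E : Type*} [NormedAddCommGroup E] [NormedSpace ℝ E]

set_option linter.unusedSectionVars false
section aux
variable {Y : Type*} [NormedAddCommGroup Y] [NormedSpace ℝ Y]

/-- The cone generated by `Θ - yb`. -/
def genCone (Θ : Set Y) (yb : Y) : Set Y := {v | ∃ s : ℝ, 0 ≤ s ∧ ∃ z ∈ Θ, v = s • (z - yb)}

lemma genCone_zero_mem {Θ : Set Y} {yb : Y} (h : yb ∈ Θ) : (0 : Y) ∈ genCone Θ yb :=
  ⟨0, le_refl 0, yb, h, by simp⟩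

lemma genCone_nonempty {Θ : Set Y} {yb : Y} (h : yb ∈ Θ) : (genCone Θ yb).Nonempty :=
  ⟨0, genCone_zero_mem h⟩

lemma genCone_smul_mem {Θ : Set Y} {yb : Y} {c : ℝ} (hc : 0 ≤ c) {v : Y}
    (hv : v ∈ genCone Θ yb) : c • v ∈ genCone Θ yb := by
  obtain ⟨s, hs, z, hz, rfl⟩ := hv
  exact ⟨c * s, mul_nonneg hc hs, z, hz, by rw [smul_smul]⟩

lemma genCone_add_mem {Θ : Set Y} (hΘ : Convex ℝ Θ) {yb : Y} (hyb : yb ∈ Θ) {v w : Y}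
    (hv : v ∈ genCone Θ yb) (hw : w ∈ genCone Θ yb) : v + w ∈ genCone Θ yb := by
  obtain ⟨s, hs, z, hz, rfl⟩ := hv
  obtain ⟨s', hs', z', hz', rfl⟩ := hw
  rcases eq_or_lt_of_le (add_nonneg hs hs' : (0:ℝ) ≤ s + s') with h0 | hpos
  · have hs0 : s = 0 := by linarith [hs, hs']
    have hs'0 : s' = 0 := by linarith [hs, hs']
    simp [hs0, hs'0, genCone_zero_mem hyb]
  · refine ⟨s + s', hpos.le, (s / (s + s')) • z + (s' / (s + s')) • z', ?_, ?_⟩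
    · exact hΘ hz hz' (div_nonneg hs hpos.le) (div_nonneg hs' hpos.le)
        (by field_simp)
    · have hne : s + s' ≠ 0 := hpos.ne'
      match_scalars <;> (field_simp; try ring)

lemma infDist_genCone_le_norm {Θ : Set Y} {yb : Y} (h : yb ∈ Θ) (v : Y) :
    infDist v (genCone Θ yb) ≤ ‖v‖ := by
  simpa using infDist_le_dist_of_mem (genCone_zero_mem h)

lemma infDist_add_le {C : Set Y} (hne : C.Nonempty)
    (hadd : ∀ v ∈ C, ∀ w ∈ C, v + w ∈ C) (v w : Y) :
    infDist (v + w) C ≤ infDist v C + infDist w C := by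
  refine le_of_forall_pos_le_add fun ε hε => ?_
  obtain ⟨a, ha, hda⟩ := (infDist_lt_iff hne).mp
    (lt_add_of_pos_right (infDist v C) (half_pos hε))
  obtain ⟨b, hb, hdb⟩ := (infDist_lt_iff hne).mp
    (lt_add_of_pos_right (infDist w C) (half_pos hε))
  calc infDist (v + w) C ≤ dist (v + w) (a + b) := infDist_le_dist_of_mem (hadd a ha b hb)
    _ ≤ dist v a + dist w b := dist_add_add_le v w a b
    _ ≤ infDist v C + infDist w C + ε := by linarith

lemma infDist_smul_le {C : Set Y} (hne : C.Nonempty)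
    (hsm : ∀ c : ℝ, 0 ≤ c → ∀ v ∈ C, c • v ∈ C) {c : ℝ} (hc : 0 < c) (v : Y) :
    infDist (c • v) C ≤ c * infDist v C := by
  refine le_of_forall_pos_le_add fun ε hε => ?_
  obtain ⟨a, ha, hda⟩ := (infDist_lt_iff hne).mp
    (lt_add_of_pos_right (infDist v C) (div_pos hε hc))
  calc infDist (c • v) C ≤ dist (c • v) (c • a) := infDist_le_dist_of_mem (hsm c hc.le a ha)
    _ = c * dist v a := by rw [dist_smul₀, Real.norm_of_nonneg hc.le]
    _ ≤ c * (infDist v C + ε / c) := by nlinarith [hda]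
    _ = c * infDist v C + ε := by rw [mul_add, mul_div_cancel₀ _ hc.ne']

lemma infDist_smul_eq {C : Set Y} (hne : C.Nonempty)
    (hsm : ∀ c : ℝ, 0 ≤ c → ∀ v ∈ C, c • v ∈ C) {c : ℝ} (hc : 0 < c) (v : Y) :
    infDist (c • v) C = c * infDist v C := by
  refine le_antisymm (infDist_smul_le hne hsm hc v) ?_
  have h2 := infDist_smul_le hne hsm (inv_pos.mpr hc) (c • v)
  rw [inv_smul_smul₀ hc.ne'] at h2
  calc c * infDist v C ≤ c * (c⁻¹ * infDist (c • v) C) := by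
        exact mul_le_mul_of_nonneg_left h2 hc.le
    _ = infDist (c • v) C := by field_simp

end aux

section key

lemma keyA
    {X Y : Type*} [NormedAddCommGroup X] [NormedSpace ℝ X]
    [NormedAddCommGroup Y] [NormedSpace ℝ Y]
    (ϑ : X → ℝ) (ϑ' : X →L[ℝ] ℝ) (f : X → Y) (f' : X →L[ℝ] Y)
    (Θ : Set Y) (xb : X) (κ : ℝ)
    (hϑ : ContDiffAt ℝ 1 ϑ xb) (hϑ' : HasFDerivAt ϑ ϑ' xb)
    (hf' : HasFDerivAt f f' xb)
    (hΘconv : Convex ℝ Θ)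
    (hfeas : f xb ∈ Θ)
    (hκ : 0 < κ)
    (hMSCQ : ∃ U ∈ 𝓝 xb, ∀ x ∈ U, infDist x {x' | f x' ∈ Θ} ≤ κ * infDist (f x) Θ)
    (hmin : ∃ U ∈ 𝓝 xb, ∀ x ∈ U, f x ∈ Θ → ϑ xb ≤ ϑ x)
    (u : X) :
    -ϑ' u ≤ κ * ‖ϑ'‖ * infDist (f' u) (genCone Θ (f xb)) := by
  obtain ⟨U₂, hU₂n, hU₂⟩ := hMSCQ
  obtain ⟨U₃, hU₃n, hU₃⟩ := hmin
  set yb := f xb with hyb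
  set C := genCone Θ yb with hC
  set d := infDist (f' u) C with hd
  have hd0 : 0 ≤ d := infDist_nonneg
  have hCne : C.Nonempty := ⟨0, 0, le_refl 0, yb, hfeas, by simp⟩
  -- main claim for each ε > 0
  have claim : ∀ ε : ℝ, 0 < ε → 0 ≤ ϑ' u + ε + (‖ϑ'‖ + ε) * (κ * (d + 2*ε) + ε) := by
    intro ε hε
    -- Lipschitz bound for ϑ
    have hstrict : HasStrictFDerivAt ϑ ϑ' xb := by
      have := hϑ.hasStrictFDerivAt one_ne_zero
      rwa [hϑ'.fderiv] at this
    obtain ⟨U₁, hU₁n, hLip⟩ := hstrict.exists_lipschitzOnWith_of_nnnorm_lt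
      (‖ϑ'‖₊ + ⟨ε, hε.le⟩) (lt_add_of_pos_right _ (by exact_mod_cast hε))
    -- nearly optimal cone point
    obtain ⟨c, hcC, hcd⟩ := (infDist_lt_iff hCne).mp
      (lt_add_of_pos_right d hε : infDist (f' u) C < d + ε)
    obtain ⟨s, hs0, z, hz, rfl⟩ := hcC
    -- radius for U₁ ∩ U₃
    obtain ⟨r, hr0, hrsub⟩ := Metric.mem_nhds_iff.mp (inter_mem hU₁n hU₃n)
    -- derivative of the line compositions
    have hline : HasDerivAt (fun t : ℝ => xb + t • u) u 0 := by
      simpa using ((hasDerivAt_id (0:ℝ)).smul_const u).const_add xb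
    have hφ : HasDerivAt (fun t : ℝ => f (xb + t • u)) (f' u) 0 := by
      have := HasFDerivAt.comp_hasDerivAt (0:ℝ) (by simpa using hf') hline
      exact this
    have hψ : HasDerivAt (fun t : ℝ => ϑ (xb + t • u)) (ϑ' u) 0 := by
      have := HasFDerivAt.comp_hasDerivAt (0:ℝ) (by simpa using hϑ') hline
      exact this
    -- eventual bounds on 𝓝[>] 0
    have E1 : ∀ᶠ t in 𝓝[>] (0:ℝ), ‖f (xb + t • u) - yb - t • f' u‖ ≤ ε * t := by
      have h1 := (hφ.hasFDerivAt.isLittleO).def hε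
      filter_upwards [nhdsWithin_le_nhds h1, self_mem_nhdsWithin] with t ht ht0
      have : ‖f (xb + t • u) - f (xb + (0:ℝ) • u) - (t - 0) • f' u‖ ≤ ε * ‖t - 0‖ := by
        simpa [ContinuousLinearMap.smulRight_apply] using ht
      simpa [hyb, abs_of_pos (show (0:ℝ) < t from ht0)] using this
    have E2 : ∀ᶠ t in 𝓝[>] (0:ℝ), |ϑ (xb + t • u) - ϑ xb - t * ϑ' u| ≤ ε * t := by
      have h1 := (hψ.hasFDerivAt.isLittleO).def hε
      filter_upwards [nhdsWithin_le_nhds h1, self_mem_nhdsWithin] with t ht ht0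
      have : ‖ϑ (xb + t • u) - ϑ (xb + (0:ℝ) • u) - (t - 0) • ϑ' u‖ ≤ ε * ‖t - 0‖ := by
        simpa [ContinuousLinearMap.smulRight_apply] using ht
      simpa [abs_of_pos (show (0:ℝ) < t from ht0), smul_eq_mul, Real.norm_eq_abs] using this
    have E3 : ∀ᶠ t in 𝓝[>] (0:ℝ), xb + t • u ∈ U₂ := by
      have : Tendsto (fun t : ℝ => xb + t • u) (𝓝 0) (𝓝 xb) := by
        simpa using hline.continuousAt.tendsto
      exact nhdsWithin_le_nhds (this hU₂n)
    have E4 : ∀ᶠ t in 𝓝[>] (0:ℝ), t * s ≤ 1 := by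
      have : Tendsto (fun t : ℝ => t * s) (𝓝 0) (𝓝 0) := by
        have h := (continuous_mul_right s).tendsto (0:ℝ); rwa [zero_mul] at h
      exact ((this.eventually_lt_const one_pos).filter_mono nhdsWithin_le_nhds).mono
        fun t ht => ht.le
    have E5 : ∀ᶠ t in 𝓝[>] (0:ℝ), t * (κ * (d + 2*ε) + ε + ‖u‖) < r := by
      have : Tendsto (fun t : ℝ => t * (κ * (d + 2*ε) + ε + ‖u‖)) (𝓝 0) (𝓝 0) := by
        have h := (continuous_mul_right (κ * (d + 2*ε) + ε + ‖u‖)).tendsto (0:ℝ)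
        rwa [zero_mul] at h
      exact (this.eventually_lt_const hr0).filter_mono nhdsWithin_le_nhds
    obtain ⟨t, ⟨⟨⟨⟨ht1, ht2⟩, ht3⟩, ht4⟩, ht5⟩, ht0⟩ :=
      ((((E1.and E2).and E3).and E4).and E5).and
        (eventually_mem_nhdsWithin) |>.exists
    have ht0' : (0:ℝ) < t := ht0
    set xt := xb + t • u with hxt
    -- the moved point in Θ
    have hmem : yb + t • (s • (z - yb)) ∈ Θ := by
      have hts0 : 0 ≤ t * s := mul_nonneg ht0'.le hs0
      have := hΘconv hfeas hz (by linarith : (0:ℝ) ≤ 1 - t * s) hts0 (by ring)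
      have heq : (1 - t * s) • yb + (t * s) • z = yb + t • (s • (z - yb)) := by
        match_scalars <;> ring
      rwa [heq] at this
    -- distance estimates
    have hdistΘ : infDist (f xt) Θ ≤ ε * t + t * (d + ε) := by
      have h1 : infDist (f xt) Θ ≤ dist (f xt) (yb + t • (s • (z - yb))) :=
        infDist_le_dist_of_mem hmem
      have h2 : dist (f xt) (yb + t • (s • (z - yb)))
          ≤ ‖f xt - yb - t • f' u‖ + ‖t • (f' u - s • (z - yb))‖ := by
        rw [dist_eq_norm]
        have : f xt - (yb + t • (s • (z - yb)))
            = (f xt - yb - t • f' u) + t • (f' u - s • (z - yb)) := by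
          module
        rw [this]; exact norm_add_le _ _
      have h3 : ‖t • (f' u - s • (z - yb))‖ ≤ t * (d + ε) := by
        rw [norm_smul, Real.norm_of_nonneg ht0'.le]
        have : ‖f' u - s • (z - yb)‖ ≤ d + ε := by
          rw [← dist_eq_norm]; exact hcd.le
        exact mul_le_mul_of_nonneg_left this ht0'.le
      calc infDist (f xt) Θ ≤ _ := h1
        _ ≤ _ := h2
        _ ≤ ε * t + t * (d + ε) := by linarith [ht1]
    have hdistΩ : infDist xt {x' | f x' ∈ Θ} ≤ κ * (d + 2*ε) * t := by
      calc infDist xt {x' | f x' ∈ Θ} ≤ κ * infDist (f xt) Θ := hU₂ xt ht3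
        _ ≤ κ * (ε * t + t * (d + ε)) := mul_le_mul_of_nonneg_left hdistΘ hκ.le
        _ = κ * (d + 2*ε) * t := by ring
    -- pick w ∈ Ω close to xt
    have hΩne : {x' | f x' ∈ Θ}.Nonempty := ⟨xb, hfeas⟩
    obtain ⟨w, hwΩ, hwd⟩ := (infDist_lt_iff hΩne).mp
      (lt_of_le_of_lt hdistΩ (lt_add_of_pos_right _ (mul_pos hε ht0') :
        κ * (d + 2*ε) * t < κ * (d + 2*ε) * t + ε * t))
    have hwdist : dist xt w ≤ (κ * (d + 2*ε) + ε) * t := by rw [add_mul]; linarith [hwd]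
    -- w and xt are in the ball of radius r
    have hxtb : dist xt xb = t * ‖u‖ := by
      rw [hxt, dist_eq_norm]
      simp [norm_smul, Real.norm_of_nonneg ht0'.le]
    have hMpos : 0 ≤ κ * (d + 2*ε) + ε :=
      add_nonneg (mul_nonneg hκ.le (by linarith)) hε.le
    have hwball : w ∈ Metric.ball xb r := by
      rw [Metric.mem_ball]
      calc dist w xb ≤ dist w xt + dist xt xb := dist_triangle _ _ _
        _ ≤ (κ * (d + 2*ε) + ε) * t + t * ‖u‖ := by
            rw [dist_comm w xt, hxtb]; linarith [hwdist]
        _ = t * (κ * (d + 2*ε) + ε + ‖u‖) := by ring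
        _ < r := ht5
    have hxtball : xt ∈ Metric.ball xb r := by
      rw [Metric.mem_ball, hxtb]
      calc t * ‖u‖ ≤ t * (κ * (d + 2*ε) + ε + ‖u‖) :=
          mul_le_mul_of_nonneg_left (le_add_of_nonneg_left hMpos) ht0'.le
        _ < r := ht5
    -- the chain of inequalities
    have hw1 : w ∈ U₁ := (hrsub hwball).1
    have hw3 : w ∈ U₃ := (hrsub hwball).2
    have hxt1 : xt ∈ U₁ := (hrsub hxtball).1
    have step1 : ϑ xb ≤ ϑ w := hU₃ w hw3 hwΩ
    have step2 : ϑ w ≤ ϑ xt + (‖ϑ'‖ + ε) * ((κ * (d + 2*ε) + ε) * t) := by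
      have := hLip.dist_le_mul w hw1 xt hxt1
      have hcoe : ((‖ϑ'‖₊ + ⟨ε, hε.le⟩ : NNReal) : ℝ) = ‖ϑ'‖ + ε := by
        exact (NNReal.coe_add _ _).trans (by rw [coe_nnnorm]; rfl)
      rw [hcoe] at this
      have habs : ϑ w - ϑ xt ≤ (‖ϑ'‖ + ε) * dist w xt :=
        le_of_abs_le (by rwa [Real.dist_eq] at this)
      have hdwx : dist w xt ≤ (κ * (d + 2*ε) + ε) * t := by rwa [dist_comm] at hwdist
      have hn : 0 ≤ ‖ϑ'‖ + ε := by positivity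
      have hmul := mul_le_mul_of_nonneg_left hdwx hn
      linarith
    have step3 : ϑ xt ≤ ϑ xb + t * ϑ' u + ε * t := by
      have := abs_le.mp ht2
      linarith [this.2]
    have final : 0 ≤ t * (ϑ' u + ε + (‖ϑ'‖ + ε) * (κ * (d + 2*ε) + ε)) := by
      have heq : t * (ϑ' u + ε + (‖ϑ'‖ + ε) * (κ * (d + 2*ε) + ε))
          = t * ϑ' u + ε * t + (‖ϑ'‖ + ε) * ((κ * (d + 2*ε) + ε) * t) := by ring
      rw [heq]; linarith
    exact nonneg_of_mul_nonneg_left (by rwa [mul_comm] at final) ht0'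
  -- pass to the limit ε → 0⁺
  have hlim : Tendsto (fun ε : ℝ => ϑ' u + ε + (‖ϑ'‖ + ε) * (κ * (d + 2*ε) + ε))
      (𝓝[>] 0) (𝓝 (ϑ' u + 0 + (‖ϑ'‖ + 0) * (κ * (d + 2*0) + 0))) := by
    apply Tendsto.mono_left _ nhdsWithin_le_nhds
    exact Continuous.tendsto (by continuity) 0
  have h0 : 0 ≤ ϑ' u + 0 + (‖ϑ'‖ + 0) * (κ * (d + 2*0) + 0) :=
    ge_of_tendsto hlim (eventually_nhdsWithin_of_forall fun ε hε => claim ε hε)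
  nlinarith [h0]

end key

/-- dual necessary optimality conditions with the enhanced bound
estimate for Lagrange multipliers in the case of a smooth cost function. -/
theorem dual_necessary_optimality_smooth_cost
    {X Y : Type*} [NormedAddCommGroup X] [NormedSpace ℝ X]
    [NormedAddCommGroup Y] [NormedSpace ℝ Y]
    (ϑ : X → ℝ) (ϑ' : X →L[ℝ] ℝ) (f : X → Y) (f' : X →L[ℝ] Y)
    (Θ : Set Y) (xb : X) (κ : ℝ)
    (hϑ : ContDiffAt ℝ 1 ϑ xb) (hϑ' : HasFDerivAt ϑ ϑ' xb)
    (hf : ContDiffAt ℝ 1 f xb) (hf' : HasFDerivAt f f' xb)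
    (hΘconv : Convex ℝ Θ) (hΘloc : ∃ V ∈ 𝓝 (f xb), IsClosed (Θ ∩ V))
    (hfeas : f xb ∈ Θ)
    (hκ : 0 < κ)
    (hMSCQ : ∃ U ∈ 𝓝 xb, ∀ x ∈ U, infDist x {x' | f x' ∈ Θ} ≤ κ * infDist (f x) Θ)
    (hmin : ∃ U ∈ 𝓝 xb, ∀ x ∈ U, f x ∈ Θ → ϑ xb ≤ ϑ x) :
    ∃ lam : Y →L[ℝ] ℝ,
      ϑ' + lam.comp f' = 0 ∧
      lam ∈ convNormal Θ (f xb) ∧ ‖lam‖ ≤ κ * ‖ϑ'‖ := by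
  classical
  set yb := f xb with hyb
  set C := genCone Θ yb with hCdef
  have hCne : C.Nonempty := genCone_nonempty hfeas
  have hCsm : ∀ c : ℝ, 0 ≤ c → ∀ v ∈ C, c • v ∈ C := fun c hc v hv => genCone_smul_mem hc hv
  have hCadd : ∀ v ∈ C, ∀ w ∈ C, v + w ∈ C := fun v hv w hw =>
    genCone_add_mem hΘconv hfeas hv hw
  have key : ∀ u : X, -ϑ' u ≤ κ * ‖ϑ'‖ * infDist (f' u) C :=
    keyA ϑ ϑ' f f' Θ xb κ hϑ hϑ' hf' hΘconv hfeas hκ hMSCQ hmin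
  set N : Y → ℝ := fun v => κ * ‖ϑ'‖ * infDist v C with hNdef
  have hN0 : (0:ℝ) ≤ κ * ‖ϑ'‖ := mul_nonneg hκ.le (norm_nonneg _)
  have hNhom : ∀ c : ℝ, 0 < c → ∀ v, N (c • v) = c * N v := by
    intro c hc v
    simp only [hNdef, infDist_smul_eq hCne hCsm hc]; ring
  have hNadd : ∀ v w, N (v + w) ≤ N v + N w := by
    intro v w
    have h := infDist_add_le hCne hCadd v w
    have := mul_le_mul_of_nonneg_left h hN0
    simp only [hNdef]; linarith [mul_add (κ * ‖ϑ'‖) (infDist v C) (infDist w C) ▸ this]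
  have hNle : ∀ v, N v ≤ κ * ‖ϑ'‖ * ‖v‖ := fun v =>
    mul_le_mul_of_nonneg_left (infDist_genCone_le_norm hfeas v) hN0
  -- kernel fact
  have h0dist : infDist (0:Y) C = 0 := infDist_zero_of_mem (genCone_zero_mem hfeas)
  have hker : ∀ w : X, f' w = 0 → ϑ' w = 0 := by
    intro w hw
    have h1 := key w
    have h2 := key (-w)
    rw [hw, h0dist] at h1
    rw [map_neg, map_neg, hw, neg_zero, h0dist] at h2
    simp only [mul_zero] at h1 h2
    linarith
  -- the partial linear functional on the range of f'
  set R : Submodule ℝ Y := LinearMap.range (f' : X →ₗ[ℝ] Y) with hRdef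
  have hsel : ∀ y : R, ∃ u : X, f' u = (y : Y) := fun y => LinearMap.mem_range.mp y.2
  choose sel hsel2 using hsel
  have hϑsel : ∀ (y : R) (u : X), f' u = (y : Y) → -ϑ' (sel y) = -ϑ' u := by
    intro y u hu
    have : f' (sel y - u) = 0 := by rw [map_sub, hsel2 y, hu, sub_self]
    have := hker _ this
    rw [map_sub] at this
    have : ϑ' (sel y) = ϑ' u := by linarith
    rw [this]
  let h : R →ₗ[ℝ] ℝ :=
    { toFun := fun y => -ϑ' (sel y)
      map_add' := by
        intro y z
        have h1 : f' (sel y + sel z) = ((y + z : R) : Y) := by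
          rw [map_add, hsel2 y, hsel2 z]; rfl
        show -ϑ' (sel (y + z)) = -ϑ' (sel y) + -ϑ' (sel z)
        rw [hϑsel (y + z) _ h1, map_add]; ring
      map_smul' := by
        intro c y
        have h1 : f' (c • sel y) = ((c • y : R) : Y) := by
          rw [map_smul, hsel2 y]; rfl
        show -ϑ' (sel (c • y)) = (RingHom.id ℝ) c • (-ϑ' (sel y))
        rw [hϑsel (c • y) _ h1, map_smul]
        simp [smul_eq_mul] }
  have hbound : ∀ y : ((⟨R, h⟩ : Y →ₗ.[ℝ] ℝ)).domain, (⟨R, h⟩ : Y →ₗ.[ℝ] ℝ) y ≤ N y := by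
    intro y
    have := key (sel y)
    rw [hsel2 y] at this
    exact this
  obtain ⟨g, hg1, hg2⟩ := exists_extension_of_le_sublinear ⟨R, h⟩ N hNhom hNadd hbound
  have hgbound : ∀ v : Y, ‖g v‖ ≤ (κ * ‖ϑ'‖) * ‖v‖ := by
    intro v
    rw [Real.norm_eq_abs, abs_le]
    constructor
    · have := (hg2 (-v)).trans (hNle (-v))
      rw [map_neg, norm_neg] at this
      linarith
    · exact (hg2 v).trans (hNle v)
  refine ⟨g.mkContinuous (κ * ‖ϑ'‖) hgbound, ?_, ?_, ?_⟩
  · ext u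
    have hmem : f' u ∈ R := LinearMap.mem_range.mpr ⟨u, by simp⟩
    have := hg1 ⟨f' u, hmem⟩
    have heq : g (f' u) = -ϑ' u := by
      rw [this]
      exact hϑsel ⟨f' u, hmem⟩ u rfl
    simp [LinearMap.mkContinuous_apply, heq]
  · intro z hz
    have hmem : z - yb ∈ C := ⟨1, zero_le_one, z, hz, (one_smul ℝ _).symm⟩
    have : g (z - yb) ≤ N (z - yb) := hg2 _
    rw [hNdef] at this
    simp only [infDist_zero_of_mem hmem, mul_zero] at this
    simpa [LinearMap.mkContinuous_apply] using this
  · exact LinearMap.mkContinuous_norm_le g hN0 hgbound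
end
end
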